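/- Let S be a semigroup, ω a complete congruence on S, and f₁, f₂ : S → [0,1]. Writing f̲ᵢ(z) = ⨅_{z' ∈ [z]ω} fᵢ(z') for the lower approximations, for every z ∈ S one has (f̲₁ ∘ f̲₂)(z) ≤ ⨅_{λ ∈ [z]ω} (f₁ ∘ f₂)(λ); that is, the sup-min composition of the lower approximations is pointwise below the lower approximation of the sup-min composition. (Theorem 3.1, membership component.) -/

import Mathlib

open unitInterval

instance : Fact ((0:ℝ) ≤ 1) := ⟨zero_le_one⟩

/-- Lower rough approximation: infimum of `f` over the ω-class of `z`. -/
noncomputable def lowerApp {S : Type*} (ω : S → S → Prop) (f : S → unitInterval) (z : S) :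
    unitInterval :=
  ⨅ z' : {z' : S // ω z z'}, f z'.1

/-- Upper rough approximation: supremum of `f` over the ω-class of `z`. -/
noncomputable def upperApp {S : Type*} (ω : S → S → Prop) (f : S → unitInterval) (z : S) :
    unitInterval :=
  ⨆ z' : {z' : S // ω z z'}, f z'.1

/-- Sup-min composition of two fuzzy sets on a semigroup. -/
noncomputable def supMinComp {S : Type*} [Semigroup S] (f g : S → unitInterval) (z : S) :
    unitInterval :=
  ⨆ p : {p : S × S // p.1 * p.2 = z}, min (f p.1.1) (g p.1.2)

/-- Inf-max composition of two fuzzy sets on a semigroup. -/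
noncomputable def infMaxComp {S : Type*} [Semigroup S] (f g : S → unitInterval) (z : S) :
    unitInterval :=
  ⨅ p : {p : S × S // p.1 * p.2 = z}, max (f p.1.1) (g p.1.2)

theorem supMinComp_lowerApp_le {S : Type*} [Semigroup S]
    (ω : S → S → Prop) (hEquiv : Equivalence ω)
    (hCong : ∀ x x' y y', ω x x' → ω y y' → ω (x * y) (x' * y'))
    (hComplete : ∀ x y c, ω (x * y) c → ∃ a b, ω x a ∧ ω y b ∧ c = a * b)
    (f₁ f₂ : S → unitInterval) :
    ∀ z : S, supMinComp (lowerApp ω f₁) (lowerApp ω f₂) z ≤ lowerApp ω (supMinComp f₁ f₂) z := by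
  intro z
  unfold lowerApp supMinComp
  apply le_iInf
  rintro ⟨lam, hlam⟩
  apply iSup_le
  rintro ⟨⟨x, y⟩, hxy⟩
  dsimp at hxy ⊢
  obtain ⟨a, b, hxa, hyb, hab⟩ := hComplete x y lam (hxy ▸ hlam)
  refine le_trans ?_ (le_iSup (fun p : {p : S × S // p.1 * p.2 = lam} => min (f₁ p.1.1) (f₂ p.1.2)) ⟨(a, b), hab.symm⟩)
  exact min_le_min (iInf_le _ (⟨a, hxa⟩ : {z' : S // ω x z'})) (iInf_le _ (⟨b, hyb⟩ : {z' : S // ω y z'}))
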